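/- Fix a real number t > 1 and define G_t(z) = log((1 − e^{−2tz})/(1 − e^{−2z})) for z > 0. Then G_t(z) > 0 for all z > 0, and G_t is strictly decreasing on (0,∞). -/

import Mathlib

open Real

lemma aux_num_pos (x : ℝ) (hx : 0 < x) : 0 < x * Real.exp x - Real.exp x + 1 := by
  have h := Real.add_one_lt_exp (x := -x) (by linarith)
  rw [Real.exp_neg] at h
  have hex : (0:ℝ) < Real.exp x := Real.exp_pos x
  have h2 : (-x + 1) * Real.exp x < (Real.exp x)⁻¹ * Real.exp x :=
    mul_lt_mul_of_pos_right (by linarith) hex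
  rw [inv_mul_cancel₀ (ne_of_gt hex)] at h2
  nlinarith

lemma aux_mono : StrictMonoOn (fun x : ℝ => (Real.exp x - 1) / x) (Set.Ioi 0) := by
  apply strictMonoOn_of_deriv_pos (convex_Ioi 0)
  · exact ((Real.continuous_exp.sub continuous_const).continuousOn).div
      continuousOn_id (fun x hx => ne_of_gt hx)
  · intro x hx
    rw [interior_Ioi] at hx
    have hx0 : x ≠ 0 := ne_of_gt hx
    have hd : HasDerivAt (fun x : ℝ => (Real.exp x - 1) / x)
        ((Real.exp x * x - (Real.exp x - 1) * 1) / x ^ 2) x :=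
      ((Real.hasDerivAt_exp x).sub_const 1).div (hasDerivAt_id x) hx0
    rw [hd.deriv]
    have hnum := aux_num_pos x hx
    have : (0:ℝ) < Real.exp x * x - (Real.exp x - 1) * 1 := by nlinarith
    exact div_pos this (by positivity)

lemma aux_key (t z : ℝ) (ht : 1 < t) (hz : 0 < z) :
    t * (Real.exp (2 * z) - 1) < Real.exp (2 * t * z) - 1 := by
  have hb : (0:ℝ) < 2 * z := by linarith
  have hab : 2 * z < 2 * t * z := by nlinarith
  have h := aux_mono (Set.mem_Ioi.2 hb) (Set.mem_Ioi.2 (lt_trans hb hab)) hab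
  simp only at h
  rw [div_lt_div_iff₀ hb (by linarith)] at h
  nlinarith

theorem Gt_pos_and_strictAnti (t : ℝ) (ht : 1 < t) :
    (∀ z : ℝ, 0 < z →
      0 < Real.log ((1 - Real.exp (-2 * t * z)) / (1 - Real.exp (-2 * z)))) ∧
    StrictAntiOn
      (fun z : ℝ => Real.log ((1 - Real.exp (-2 * t * z)) / (1 - Real.exp (-2 * z))))
      (Set.Ioi 0) := by
  have hden : ∀ z : ℝ, 0 < z → Real.exp (-2 * z) < 1 := by
    intro z hz
    rw [Real.exp_lt_one_iff]
    nlinarith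
  have hnum : ∀ z : ℝ, 0 < z → Real.exp (-2 * t * z) < 1 := by
    intro z hz
    rw [Real.exp_lt_one_iff]
    nlinarith
  have hlt : ∀ z : ℝ, 0 < z → Real.exp (-2 * t * z) < Real.exp (-2 * z) := by
    intro z hz
    apply Real.exp_lt_exp.2
    nlinarith
  constructor
  · intro z hz
    apply Real.log_pos
    rw [one_lt_div (by linarith [hden z hz])]
    linarith [hlt z hz]
  · -- strict antitonicity
    have hg : StrictAntiOn
        (fun z : ℝ => Real.log (1 - Real.exp (-2 * t * z)) - Real.log (1 - Real.exp (-2 * z)))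
        (Set.Ioi 0) := by
      apply strictAntiOn_of_deriv_neg (convex_Ioi 0)
      · apply ContinuousOn.sub
        · apply ContinuousOn.log
          · exact (continuous_const.sub
              ((Real.continuous_exp).comp (by continuity))).continuousOn
          · intro x hx
            have := hnum x hx
            linarith
        · apply ContinuousOn.log
          · exact (continuous_const.sub
              ((Real.continuous_exp).comp (by continuity))).continuousOn
          · intro x hx
            have := hden x hx
            linarith
      · intro z hz
        rw [interior_Ioi] at hz
        have hz' : 0 < z := hz
        have hn1 : (1 : ℝ) - Real.exp (-2 * t * z) ≠ 0 := by
          have := hnum z hz; linarith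
        have hn2 : (1 : ℝ) - Real.exp (-2 * z) ≠ 0 := by
          have := hden z hz; linarith
        have h1 : HasDerivAt (fun z : ℝ => (1:ℝ) - Real.exp (-2 * t * z))
            (2 * t * Real.exp (-2 * t * z)) z := by
          have hlin : HasDerivAt (fun z : ℝ => -2 * t * z) (-2 * t) z := by
            simpa using (hasDerivAt_id z).const_mul (-2 * t)
          have := (hlin.exp).const_sub 1
          refine this.congr_deriv ?_
          ring
        have h2 : HasDerivAt (fun z : ℝ => (1:ℝ) - Real.exp (-2 * z))
            (2 * Real.exp (-2 * z)) z := by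
          have hlin : HasDerivAt (fun z : ℝ => -2 * z) (-2 : ℝ) z := by
            simpa using (hasDerivAt_id z).const_mul (-2 : ℝ)
          have := (hlin.exp).const_sub 1
          refine this.congr_deriv ?_
          ring
        have hd : HasDerivAt
            (fun z : ℝ => Real.log (1 - Real.exp (-2 * t * z)) - Real.log (1 - Real.exp (-2 * z)))
            (2 * t * Real.exp (-2 * t * z) / (1 - Real.exp (-2 * t * z)) -
              2 * Real.exp (-2 * z) / (1 - Real.exp (-2 * z))) z :=
          (h1.log hn1).sub (h2.log hn2)
        rw [hd.deriv]
        -- show the derivative is negative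
        have hA : Real.exp (-2 * t * z) = (Real.exp (2 * t * z))⁻¹ := by
          rw [← Real.exp_neg]; ring_nf
        have hB : Real.exp (-2 * z) = (Real.exp (2 * z))⁻¹ := by
          rw [← Real.exp_neg]; ring_nf
        set A := Real.exp (2 * t * z) with hAdef
        set B := Real.exp (2 * z) with hBdef
        have hA1 : 1 < A := by
          rw [hAdef]; exact Real.one_lt_exp_iff.2 (by nlinarith [hz'])
        have hB1 : 1 < B := by
          rw [hBdef]; exact Real.one_lt_exp_iff.2 (by nlinarith [hz'])
        have hkey := aux_key t z ht hz
        rw [hA, hB]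
        have hA0 : (0:ℝ) < A := by linarith
        have hB0 : (0:ℝ) < B := by linarith
        have e1 : (1 : ℝ) - A⁻¹ = (A - 1) / A := by field_simp
        have e2 : (1 : ℝ) - B⁻¹ = (B - 1) / B := by field_simp
        rw [e1, e2]
        have r1 : 2 * t * A⁻¹ / ((A - 1) / A) = 2 * t / (A - 1) := by
          field_simp
        have r2 : 2 * B⁻¹ / ((B - 1) / B) = 2 / (B - 1) := by
          field_simp
        rw [r1, r2, sub_neg, div_lt_div_iff₀ (by linarith) (by linarith)]
        nlinarith
    intro a ha b hb hab
    have ea : Real.log ((1 - Real.exp (-2 * t * a)) / (1 - Real.exp (-2 * a)))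
        = Real.log (1 - Real.exp (-2 * t * a)) - Real.log (1 - Real.exp (-2 * a)) :=
      Real.log_div (by have := hnum a ha; linarith) (by have := hden a ha; linarith)
    have eb : Real.log ((1 - Real.exp (-2 * t * b)) / (1 - Real.exp (-2 * b)))
        = Real.log (1 - Real.exp (-2 * t * b)) - Real.log (1 - Real.exp (-2 * b)) :=
      Real.log_div (by have := hnum b hb; linarith) (by have := hden b hb; linarith)
    simp only [ea, eb]
    exact hg ha hb hab
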